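/- arXiv:2406.00849 — 4 statements merged into one kernel-verified Lean document; each statement's English description precedes it below -/
import Mathlib

section
/- Eneström–Kakeya theorem (lower bound part): if P(z) = a_0 + a_1 z + ... + a_n z^n is a polynomial with all coefficients a_k positive real numbers, then every complex root z of P satisfies |z| ≥ min over 1 ≤ k ≤ n of a_{k-1}/a_k. -/
theorem enestroem_kakeya_lower (n : ℕ) (hn : 1 ≤ n) (a : ℕ → ℝ)
    (ha : ∀ k ≤ n, 0 < a k) (z : ℂ)
    (hz : ∑ k ∈ Finset.range (n + 1), (a k : ℂ) * z ^ k = 0) :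
    ‖z‖ ≥ (Finset.Icc 1 n).inf' (Finset.nonempty_Icc.mpr hn)
      (fun k => a (k - 1) / a k) := by
  set β := (Finset.Icc 1 n).inf' (Finset.nonempty_Icc.mpr hn)
      (fun k => a (k - 1) / a k) with hβdef
  by_contra hlt
  push_neg at hlt
  have hβpos : 0 < β := by
    rw [hβdef, Finset.lt_inf'_iff]
    intro k hk
    simp only [Finset.mem_Icc] at hk
    exact div_pos (ha (k - 1) (le_trans (Nat.sub_le k 1) hk.2)) (ha k hk.2)
  have hkey : ∀ k < n, β * a (k + 1) ≤ a k := by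
    intro k hk
    have h1 : β ≤ a k / a (k + 1) := by
      have hmem : k + 1 ∈ Finset.Icc 1 n := Finset.mem_Icc.mpr ⟨by omega, hk⟩
      have := Finset.inf'_le (f := fun k => a (k - 1) / a k) hmem
      simpa only [Nat.add_sub_cancel] using this
    have h2 := (le_div_iff₀ (ha (k + 1) hk)).mp h1
    linarith
  have hz' : ∑ k ∈ Finset.range (n + 1), (a k : ℂ) * z ^ (k + 1) = 0 := by
    calc ∑ k ∈ Finset.range (n + 1), (a k : ℂ) * z ^ (k + 1)
        = z * ∑ k ∈ Finset.range (n + 1), (a k : ℂ) * z ^ k := by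
          rw [Finset.mul_sum]; exact Finset.sum_congr rfl fun k _ => by ring
      _ = 0 := by rw [hz, mul_zero]
  have hsplit1 : ∑ k ∈ Finset.range (n + 1), (a k : ℂ) * z ^ (k + 1)
      = ∑ k ∈ Finset.range n, (a k : ℂ) * z ^ (k + 1) + (a n : ℂ) * z ^ (n + 1) :=
    Finset.sum_range_succ _ n
  have hsplit2 : ∑ k ∈ Finset.range (n + 1), (a k : ℂ) * z ^ k
      = (a 0 : ℂ) + ∑ k ∈ Finset.range n, (a (k + 1) : ℂ) * z ^ (k + 1) := by
    rw [Finset.sum_range_succ' (fun k => (a k : ℂ) * z ^ k) n]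
    simp [add_comm]
  have hkeyC : (β : ℂ) * (a 0 : ℂ)
      = ∑ k ∈ Finset.range n, ((a k - β * a (k + 1) : ℝ) : ℂ) * z ^ (k + 1)
        + (a n : ℂ) * z ^ (n + 1) := by
    have e1 : ∑ k ∈ Finset.range n, ((a k - β * a (k + 1) : ℝ) : ℂ) * z ^ (k + 1)
        = ∑ k ∈ Finset.range n, (a k : ℂ) * z ^ (k + 1)
          - (β : ℂ) * ∑ k ∈ Finset.range n, (a (k + 1) : ℂ) * z ^ (k + 1) := by
      rw [Finset.mul_sum, ← Finset.sum_sub_distrib]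
      exact Finset.sum_congr rfl fun k _ => by push_cast; ring
    rw [e1]
    have e2 : ∑ k ∈ Finset.range n, (a k : ℂ) * z ^ (k + 1) + (a n : ℂ) * z ^ (n + 1) = 0 := by
      rw [← hsplit1, hz']
    have e3 : (a 0 : ℂ) + ∑ k ∈ Finset.range n, (a (k + 1) : ℂ) * z ^ (k + 1) = 0 := by
      rw [← hsplit2, hz]
    linear_combination (β : ℂ) * e3 - e2
  have hzabs : 0 ≤ ‖z‖ := norm_nonneg z
  have habs : β * a 0 ≤ (∑ k ∈ Finset.range n,
      (a k - β * a (k + 1)) * (‖z‖) ^ (k + 1)) + a n * (‖z‖) ^ (n + 1) := by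
    calc β * a 0 = ‖(β : ℂ) * (a 0 : ℂ)‖ := by
          rw [norm_mul, Complex.norm_real, Complex.norm_real, Real.norm_eq_abs, Real.norm_eq_abs,
            abs_of_pos hβpos, abs_of_pos (ha 0 (by omega))]
      _ = ‖∑ k ∈ Finset.range n, ((a k - β * a (k + 1) : ℝ) : ℂ) * z ^ (k + 1)
            + (a n : ℂ) * z ^ (n + 1)‖ := by rw [hkeyC]
      _ ≤ ‖∑ k ∈ Finset.range n, ((a k - β * a (k + 1) : ℝ) : ℂ) * z ^ (k + 1)‖
            + ‖(a n : ℂ) * z ^ (n + 1)‖ := norm_add_le _ _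
      _ ≤ (∑ k ∈ Finset.range n,
            ‖((a k - β * a (k + 1) : ℝ) : ℂ) * z ^ (k + 1)‖)
            + ‖(a n : ℂ) * z ^ (n + 1)‖ := by
          gcongr
          exact norm_sum_le _ _
      _ = (∑ k ∈ Finset.range n,
            (a k - β * a (k + 1)) * (‖z‖) ^ (k + 1))
            + a n * (‖z‖) ^ (n + 1) := by
          congr 1
          · refine Finset.sum_congr rfl fun k hk => ?_
            rw [norm_mul, norm_pow, Complex.norm_real, Real.norm_eq_abs,
              abs_of_nonneg (sub_nonneg.mpr (hkey k (Finset.mem_range.mp hk)))]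
          · rw [norm_mul, norm_pow, Complex.norm_real, Real.norm_eq_abs,
              abs_of_pos (ha n le_rfl)]
  have hlast : a n * (‖z‖) ^ (n + 1) < a n * β ^ (n + 1) :=
    mul_lt_mul_of_pos_left (pow_lt_pow_left₀ hlt hzabs (by omega)) (ha n le_rfl)
  have hsumle : ∑ k ∈ Finset.range n, (a k - β * a (k + 1)) * (‖z‖) ^ (k + 1)
      ≤ ∑ k ∈ Finset.range n, (a k - β * a (k + 1)) * β ^ (k + 1) :=
    Finset.sum_le_sum fun k hk =>
      mul_le_mul_of_nonneg_left (pow_le_pow_left₀ hzabs hlt.le _)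
        (sub_nonneg.mpr (hkey k (Finset.mem_range.mp hk)))
  have htel : ∑ k ∈ Finset.range n, (a k - β * a (k + 1)) * β ^ (k + 1)
      + a n * β ^ (n + 1) = β * a 0 := by
    have h := Finset.sum_range_sub' (fun k => a k * β ^ (k + 1)) n
    have h2 : ∑ k ∈ Finset.range n, (a k - β * a (k + 1)) * β ^ (k + 1)
        = ∑ k ∈ Finset.range n, (a k * β ^ (k + 1) - a (k + 1) * β ^ (k + 1 + 1)) :=
      Finset.sum_congr rfl fun k _ => by ring
    rw [h2, h]
    ring
  linarith
end

section
/- Eneström–Kakeya theorem (upper bound part): if P(z) = a_0 + a_1 z + ... + a_n z^n is a polynomial with all coefficients a_k positive real numbers, then every complex root z of P satisfies |z| ≤ max over 1 ≤ k ≤ n of a_{k-1}/a_k. -/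
theorem enestroem_kakeya_upper (n : ℕ) (hn : 1 ≤ n) (a : ℕ → ℝ)
    (ha : ∀ k ≤ n, 0 < a k) (z : ℂ)
    (hz : ∑ k ∈ Finset.range (n + 1), (a k : ℂ) * z ^ k = 0) :
    ‖z‖ ≤ (Finset.Icc 1 n).sup' (Finset.nonempty_Icc.mpr hn)
      (fun k => a (k - 1) / a k) := by
  set β := (Finset.Icc 1 n).sup' (Finset.nonempty_Icc.mpr hn)
      (fun k => a (k - 1) / a k) with hβdef
  by_contra hcon
  push_neg at hcon
  set r := ‖z‖ with hrdef
  have h1mem : (1 : ℕ) ∈ Finset.Icc 1 n := Finset.mem_Icc.mpr ⟨le_rfl, hn⟩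
  have hβpos : 0 < β := by
    have hle := Finset.le_sup' (fun k => a (k - 1) / a k) h1mem
    have h0 : 0 < a 0 / a 1 := div_pos (ha 0 (Nat.zero_le n)) (ha 1 hn)
    exact lt_of_lt_of_le h0 hle
  have hrpos : 0 < r := hβpos.trans hcon
  have hβk : ∀ j, j < n → a j ≤ β * a (j + 1) := by
    intro j hj
    have hmem : j + 1 ∈ Finset.Icc 1 n := Finset.mem_Icc.mpr ⟨by omega, by omega⟩
    have hle := Finset.le_sup' (fun k => a (k - 1) / a k) hmem
    have hak := ha (j + 1) (by omega)
    have : a (j + 1 - 1) / a (j + 1) ≤ β := hle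
    rw [div_le_iff₀ hak] at this
    simpa [mul_comm] using this
  -- Key identity: a n * z^(n+1) = β * a 0 + ∑_{j<n} (β a_{j+1} - a_j) z^{j+1}
  have key : (a n : ℂ) * z ^ (n + 1)
      = (β : ℂ) * (a 0 : ℂ)
        + ∑ j ∈ Finset.range n, ((β : ℂ) * (a (j + 1) : ℂ) - (a j : ℂ)) * z ^ (j + 1) := by
    have hbz : (β : ℂ) * ∑ k ∈ Finset.range (n + 1), (a k : ℂ) * z ^ k = 0 := by
      rw [hz, mul_zero]
    have hzz : z * ∑ k ∈ Finset.range (n + 1), (a k : ℂ) * z ^ k = 0 := by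
      rw [hz, mul_zero]
    rw [Finset.mul_sum] at hbz hzz
    rw [Finset.sum_range_succ' (fun k => (β : ℂ) * ((a k : ℂ) * z ^ k)) n] at hbz
    rw [Finset.sum_range_succ (fun k => z * ((a k : ℂ) * z ^ k)) n] at hzz
    have hA := eq_neg_of_add_eq_zero_left hbz
    have hB := eq_neg_of_add_eq_zero_left hzz
    have expand : ∑ j ∈ Finset.range n, ((β : ℂ) * (a (j + 1) : ℂ) - (a j : ℂ)) * z ^ (j + 1)
        = ∑ j ∈ Finset.range n, (β : ℂ) * ((a (j + 1) : ℂ) * z ^ (j + 1))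
          - ∑ j ∈ Finset.range n, z * ((a j : ℂ) * z ^ j) := by
      rw [← Finset.sum_sub_distrib]
      exact Finset.sum_congr rfl fun j _ => by ring
    rw [expand, hA, hB]
    ring
  -- Take absolute values
  have habs : a n * r ^ (n + 1)
      ≤ β * a 0 + ∑ j ∈ Finset.range n, (β * a (j + 1) - a j) * r ^ (j + 1) := by
    have h1 : a n * r ^ (n + 1) = ‖((a n : ℂ) * z ^ (n + 1))‖ := by
      rw [norm_mul, norm_pow, Complex.norm_real, Real.norm_eq_abs, abs_of_pos (ha n le_rfl)]
    rw [h1, key]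
    refine le_trans (norm_add_le _ _) (add_le_add ?_ ?_)
    · rw [norm_mul, Complex.norm_of_nonneg hβpos.le,
        Complex.norm_of_nonneg (ha 0 (Nat.zero_le n)).le]
    · refine le_trans (norm_sum_le _ _) ?_
      apply Finset.sum_le_sum
      intro j hj
      rw [Finset.mem_range] at hj
      have hnn : 0 ≤ β * a (j + 1) - a j := by linarith [hβk j hj]
      rw [norm_mul, norm_pow]
      have : ‖((β : ℂ) * (a (j + 1) : ℂ) - (a j : ℂ))‖
          = β * a (j + 1) - a j := by
        rw [show (β : ℂ) * (a (j + 1) : ℂ) - (a j : ℂ)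
            = ((β * a (j + 1) - a j : ℝ) : ℂ) by push_cast; ring,
          Complex.norm_of_nonneg hnn]
      rw [this]
  -- Real estimate: RHS < a n * r^(n+1)
  set T := ∑ j ∈ Finset.range n, a j * r ^ j with hT
  have hTpos : 0 < T := by
    apply Finset.sum_pos
    · intro j hj
      rw [Finset.mem_range] at hj
      exact mul_pos (ha j (by omega)) (pow_pos hrpos j)
    · exact Finset.nonempty_range_iff.mpr (by omega)
  have hsum : β * a 0 + ∑ j ∈ Finset.range n, (β * a (j + 1) - a j) * r ^ (j + 1)
      = β * (a n * r ^ n) + (β - r) * T := by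
    have h1 : ∑ j ∈ Finset.range n, (β * a (j + 1) - a j) * r ^ (j + 1)
        = β * (∑ j ∈ Finset.range n, a (j + 1) * r ^ (j + 1)) - r * T := by
      rw [Finset.mul_sum, Finset.mul_sum, ← Finset.sum_sub_distrib]
      exact Finset.sum_congr rfl fun j _ => by ring
    have hs1 := Finset.sum_range_succ' (fun k => a k * r ^ k) n
    have hs2 := Finset.sum_range_succ (fun k => a k * r ^ k) n
    simp only [pow_zero, mul_one] at hs1
    rw [h1]
    have : (∑ j ∈ Finset.range n, a (j + 1) * r ^ (j + 1)) = T + a n * r ^ n - a 0 := by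
      have := hs1.symm.trans hs2
      linarith
    rw [this]
    ring
  have hfin : β * (a n * r ^ n) + (β - r) * T < a n * r ^ (n + 1) := by
    have h1 : 0 < a n * r ^ n := mul_pos (ha n le_rfl) (pow_pos hrpos n)
    have h2 : (β - r) * T < 0 := mul_neg_of_neg_of_pos (by linarith) hTpos
    have h3 : β * (a n * r ^ n) < r * (a n * r ^ n) :=
      mul_lt_mul_of_pos_right hcon h1
    have h4 : a n * r ^ (n + 1) = r * (a n * r ^ n) := by ring
    linarith
  rw [hsum] at habs
  linarith
end

section
/- Let y be a real polynomial of degree n ≥ 2 all of whose zeros are real, and let τ be its largest zero, with τ > 0. Then for every q with 0 ≤ q ≤ n−2, the product y^{(q+2)}(τ) · y^{(q+1)}(τ) is strictly positive. -/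
/-- A real polynomial with as many real roots (with multiplicity) as its degree,
all of them below `x`, evaluates at `x` with the sign of its leading coefficient. -/
lemma evalA {p : Polynomial ℝ} (hp : p ≠ 0) (hc : Multiset.card p.roots = p.natDegree)
    {x : ℝ} (hx : ∀ r ∈ p.roots, r < x) :
    0 < Polynomial.eval x p * p.leadingCoeff := by
  have h := Polynomial.C_leadingCoeff_mul_prod_multiset_X_sub_C hc
  have heval : Polynomial.eval x p = p.leadingCoeff * (p.roots.map fun r => x - r).prod := by
    conv_lhs => rw [← h]
    simp [Polynomial.eval_multiset_prod, Multiset.map_map, Function.comp]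
  rw [heval]
  have hprod : 0 < (p.roots.map fun r => x - r).prod := by
    apply Multiset.prod_pos
    intro a ha
    obtain ⟨r, hr, rfl⟩ := Multiset.mem_map.1 ha
    linarith [hx r hr]
  have hlc : p.leadingCoeff ≠ 0 := Polynomial.leadingCoeff_ne_zero.2 hp
  have h2 : 0 < p.leadingCoeff ^ 2 := by positivity
  nlinarith

/-- Under the same hypotheses, the derivative also evaluates at `x` with the sign of the
leading coefficient (provided the degree is at least one). -/
lemma evalB : ∀ N : ℕ, ∀ p : Polynomial ℝ, p.natDegree = N → 1 ≤ p.natDegree →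
    Multiset.card p.roots = p.natDegree → ∀ x : ℝ, (∀ r ∈ p.roots, r < x) →
    0 < Polynomial.eval x (Polynomial.derivative p) * p.leadingCoeff := by
  intro N
  induction N using Nat.strong_induction_on with
  | _ N ih =>
    intro p hN hd hc x hx
    have hp0 : p ≠ 0 := fun h => by simp [h] at hd
    have hr0 : p.roots ≠ 0 := by
      intro h; rw [h] at hc; simp at hc; omega
    obtain ⟨r, hr⟩ := Multiset.exists_mem_of_ne_zero hr0
    have hroot : p.IsRoot r := (Polynomial.isRoot_of_mem_roots hr)
    set q := p /ₘ (Polynomial.X - Polynomial.C r) with hq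
    have hpq : (Polynomial.X - Polynomial.C r) * q = p :=
      (Polynomial.mul_divByMonic_eq_iff_isRoot).2 hroot
    have hq0 : q ≠ 0 := by
      intro h; rw [h, mul_zero] at hpq; exact hp0 hpq.symm
    have hXr : (Polynomial.X - Polynomial.C r : Polynomial ℝ) ≠ 0 := Polynomial.X_sub_C_ne_zero r
    have hrootsp : p.roots = r ::ₘ q.roots := by
      rw [← hpq, Polynomial.roots_mul (hpq ▸ hp0), Polynomial.roots_X_sub_C,
        Multiset.singleton_add]
    have hdegp : p.natDegree = 1 + q.natDegree := by
      rw [← hpq, Polynomial.natDegree_mul hXr hq0, Polynomial.natDegree_X_sub_C]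
    have hcq : Multiset.card q.roots = q.natDegree := by
      rw [hrootsp] at hc; simp at hc; omega
    have hlcpq : p.leadingCoeff = q.leadingCoeff := by
      rw [← hpq, Polynomial.leadingCoeff_mul, Polynomial.leadingCoeff_X_sub_C, one_mul]
    have hxq : ∀ s ∈ q.roots, s < x := fun s hs =>
      hx s (by rw [hrootsp]; exact Multiset.mem_cons_of_mem hs)
    have hA : 0 < Polynomial.eval x q * q.leadingCoeff := evalA hq0 hcq hxq
    have hxr : r < x := hx r hr
    have hderiv : Polynomial.derivative p
        = q + (Polynomial.X - Polynomial.C r) * Polynomial.derivative q := by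
      rw [← hpq, Polynomial.derivative_mul, Polynomial.derivative_X_sub_C, one_mul]
    have hterm2 : 0 ≤ Polynomial.eval x (Polynomial.derivative q) * q.leadingCoeff := by
      rcases Nat.eq_zero_or_pos q.natDegree with h0 | h1
      · have : q = Polynomial.C (q.coeff 0) := Polynomial.eq_C_of_natDegree_eq_zero h0
        rw [this]; simp
      · exact le_of_lt (ih q.natDegree (by omega) q rfl h1 hcq x hxq)
    rw [hderiv, hlcpq]
    simp only [Polynomial.eval_add, Polynomial.eval_mul, Polynomial.eval_sub, Polynomial.eval_X,
      Polynomial.eval_C]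
    nlinarith

/-- Degree, leading coefficient and root count of the derivative of a real-rooted polynomial. -/
lemma derivFacts {p : Polynomial ℝ} (hp : p ≠ 0) {d : ℕ} (hdp : p.natDegree = d) (hd : 1 ≤ d)
    (hc : Multiset.card p.roots = d) :
    (Polynomial.derivative p).natDegree = d - 1 ∧
    (Polynomial.derivative p).leadingCoeff = d * p.leadingCoeff ∧
    Multiset.card (Polynomial.derivative p).roots = d - 1 := by
  have hco : (Polynomial.derivative p).coeff (d - 1) = p.coeff d * d := by
    rw [Polynomial.coeff_derivative]
    congr 1
    · congr 1; omega
    · have : d - 1 + 1 = d := by omega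
      rw [← this]; push_cast; ring
  have hlcp : p.coeff d = p.leadingCoeff := by rw [← hdp]; rfl
  have hlcne : p.leadingCoeff ≠ 0 := Polynomial.leadingCoeff_ne_zero.2 hp
  have hcone : (Polynomial.derivative p).coeff (d - 1) ≠ 0 := by
    rw [hco, hlcp]
    have : (d : ℝ) ≠ 0 := Nat.cast_ne_zero.2 (by omega)
    exact mul_ne_zero hlcne this
  have hdegle : (Polynomial.derivative p).natDegree ≤ d - 1 := by
    have := Polynomial.natDegree_derivative_le p
    omega
  have hdeg : (Polynomial.derivative p).natDegree = d - 1 :=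
    le_antisymm hdegle (Polynomial.le_natDegree_of_ne_zero hcone)
  refine ⟨hdeg, ?_, ?_⟩
  · rw [Polynomial.leadingCoeff, hdeg, hco, hlcp]; ring
  · have h1 : Multiset.card (Polynomial.derivative p).roots ≤ d - 1 := by
      have := Polynomial.card_roots' (Polynomial.derivative p)
      omega
    have h2 := Polynomial.card_roots_le_derivative p
    omega

theorem derivative_product_positive_at_largest_zero (n : ℕ) (hn : 2 ≤ n)
    (y : Polynomial ℝ) (hdeg : y.natDegree = n)
    (hroots : Multiset.card y.roots = n) (hsimple : y.roots.Nodup)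
    (τ : ℝ) (hτ : IsGreatest {x : ℝ | Polynomial.eval x y = 0} τ) (hτpos : 0 < τ)
    (q : ℕ) (hq : q ≤ n - 2) :
    0 < Polynomial.eval τ (Polynomial.derivative^[q + 2] y) *
        Polynomial.eval τ (Polynomial.derivative^[q + 1] y) := by
  have hy0 : y ≠ 0 := fun h => by rw [h] at hdeg; simp at hdeg; omega
  have hlcy : y.leadingCoeff ≠ 0 := Polynomial.leadingCoeff_ne_zero.2 hy0
  have hτroot : y.IsRoot τ := hτ.1
  have hle : ∀ r ∈ y.roots, r ≤ τ := fun r hr =>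
    hτ.2 (show Polynomial.eval r y = 0 from Polynomial.isRoot_of_mem_roots hr)
  -- factor out the root τ
  set p0 := y /ₘ (Polynomial.X - Polynomial.C τ) with hp0def
  have hpq : (Polynomial.X - Polynomial.C τ) * p0 = y :=
    (Polynomial.mul_divByMonic_eq_iff_isRoot).2 hτroot
  have hp00 : p0 ≠ 0 := by
    intro h; rw [h, mul_zero] at hpq; exact hy0 hpq.symm
  have hXr : (Polynomial.X - Polynomial.C τ : Polynomial ℝ) ≠ 0 := Polynomial.X_sub_C_ne_zero τ
  have hrootsy : y.roots = τ ::ₘ p0.roots := by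
    rw [← hpq, Polynomial.roots_mul (hpq ▸ hy0), Polynomial.roots_X_sub_C,
      Multiset.singleton_add]
  have hdq : p0.natDegree = n - 1 := by
    have : y.natDegree = 1 + p0.natDegree := by
      rw [← hpq, Polynomial.natDegree_mul hXr hp00, Polynomial.natDegree_X_sub_C]
    omega
  have hcq : Multiset.card p0.roots = p0.natDegree := by
    rw [hrootsy] at hroots; simp at hroots; omega
  have hlc0 : y.leadingCoeff = p0.leadingCoeff := by
    rw [← hpq, Polynomial.leadingCoeff_mul, Polynomial.leadingCoeff_X_sub_C, one_mul]
  have hτnot : τ ∉ p0.roots := by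
    rw [hrootsy] at hsimple; exact (Multiset.nodup_cons.1 hsimple).1
  have hlt0 : ∀ r ∈ p0.roots, r < τ := fun r hr =>
    lt_of_le_of_ne (hle r (by rw [hrootsy]; exact Multiset.mem_cons_of_mem hr))
      (fun h => hτnot (h ▸ hr))
  have hA0 : 0 < Polynomial.eval τ p0 * p0.leadingCoeff := evalA hp00 hcq hlt0
  have hevaly' : Polynomial.eval τ (Polynomial.derivative y) = Polynomial.eval τ p0 := by
    rw [← hpq, Polynomial.derivative_mul, Polynomial.derivative_X_sub_C, one_mul]
    simp
  have hd1 := derivFacts hy0 hdeg (by omega) hroots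
  have hroots1 : ∀ s ∈ (Polynomial.derivative y).roots, s < τ := by
    intro s hs
    by_contra hge
    push_neg at hge
    have hs0 : Polynomial.eval s (Polynomial.derivative y) = 0 :=
      Polynomial.isRoot_of_mem_roots hs
    rcases eq_or_lt_of_le hge with heq | hlt
    · rw [← heq, hevaly'] at hs0
      rw [hs0] at hA0; simp at hA0
    · have := evalB n y hdeg (by omega) (hdeg ▸ hroots) s
        (fun r hr => lt_of_le_of_lt (hle r hr) hlt)
      rw [hs0] at this; simp at this
  -- the invariant, for all derivative orders from 1 to n
  have key : ∀ k, 1 ≤ k → k ≤ n →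
      (Polynomial.derivative^[k] y).natDegree = n - k ∧
      Multiset.card (Polynomial.derivative^[k] y).roots = n - k ∧
      (∀ r ∈ (Polynomial.derivative^[k] y).roots, r < τ) ∧
      0 < (Polynomial.derivative^[k] y).leadingCoeff * y.leadingCoeff := by
    intro k hk1
    induction k, hk1 using Nat.le_induction with
    | base =>
      intro _
      rw [Function.iterate_one]
      refine ⟨by rw [hd1.1], by rw [hd1.2.2], hroots1, ?_⟩
      rw [hd1.2.1, mul_assoc]
      have hnpos : (0 : ℝ) < (n : ℝ) := by positivity
      exact mul_pos hnpos (mul_self_pos.2 hlcy)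
    | succ k hk ih =>
      intro hkn
      obtain ⟨ihd, ihc, ihr, ihl⟩ := ih (by omega)
      set p := Polynomial.derivative^[k] y with hpdef
      have hiter : Polynomial.derivative^[k + 1] y = Polynomial.derivative p :=
        Function.iterate_succ_apply' Polynomial.derivative k y
      have hlcp : p.leadingCoeff ≠ 0 := by
        intro h; rw [h] at ihl; simp at ihl
      have hp0 : p ≠ 0 := Polynomial.leadingCoeff_ne_zero.1 hlcp
      have hd2 : 1 ≤ n - k := by omega
      have hdf := derivFacts hp0 ihd hd2 ihc
      rw [hiter]
      refine ⟨by rw [hdf.1]; omega, by rw [hdf.2.2]; omega, ?_, ?_⟩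
      · intro s hs
        by_contra hge
        push_neg at hge
        have hs0 : Polynomial.eval s (Polynomial.derivative p) = 0 :=
          Polynomial.isRoot_of_mem_roots hs
        have := evalB (n - k) p ihd (by omega) (by rw [ihd]; exact ihc) s
          (fun r hr => lt_of_lt_of_le (ihr r hr) hge)
        rw [hs0] at this; simp at this
      · rw [hdf.2.1, mul_assoc]
        have hnk : (0 : ℝ) < ((n - k : ℕ) : ℝ) := by
          have : 0 < n - k := by omega
          exact_mod_cast this
        exact mul_pos hnk ihl
  -- evaluation of each derivative at τ has the sign of the leading coefficient of y
  have main : ∀ k, 1 ≤ k → k ≤ n →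
      0 < Polynomial.eval τ (Polynomial.derivative^[k] y) * y.leadingCoeff := by
    intro k h1 h2
    obtain ⟨hd', hc', hr', hl'⟩ := key k h1 h2
    have hlcne : (Polynomial.derivative^[k] y).leadingCoeff ≠ 0 := by
      intro h; rw [h] at hl'; simp at hl'
    have hne : Polynomial.derivative^[k] y ≠ 0 := Polynomial.leadingCoeff_ne_zero.1 hlcne
    have hA := evalA hne (by rw [hd']; exact hc') hr'
    nlinarith [mul_pos hA hl', mul_self_nonneg (Polynomial.derivative^[k] y).leadingCoeff]
  have ha := main (q + 2) (by omega) (by omega)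
  have hb := main (q + 1) (by omega) (by omega)
  nlinarith [mul_pos ha hb, mul_self_nonneg y.leadingCoeff]
end

section
/- For n ≥ 5 a natural number and λ > −1/2 real, the quantity D = (20λ²+80λ+107) n²(n+2λ)² − 4(2λ+1)(20λ²+68λ+65) n(n+2λ) + 24(2λ+1)²(2λ+3)(2λ+4) satisfies D > (20λ²+80λ+107)[n(n+2λ) − 8(λ+2)]². -/
theorem D_lower_bound (n : ℕ) (hn : 5 ≤ n) (lam : ℝ) (hlam : -1/2 < lam) (D : ℝ)
    (hD : D = (20 * lam ^ 2 + 80 * lam + 107) * (n : ℝ) ^ 2 * ((n : ℝ) + 2 * lam) ^ 2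
      - 4 * (2 * lam + 1) * (20 * lam ^ 2 + 68 * lam + 65) * (n : ℝ) * ((n : ℝ) + 2 * lam)
      + 24 * (2 * lam + 1) ^ 2 * (2 * lam + 3) * (2 * lam + 4)) :
    D > (20 * lam ^ 2 + 80 * lam + 107) *
      ((n : ℝ) * ((n : ℝ) + 2 * lam) - 8 * (lam + 2)) ^ 2 := by
  have hn5 : (5:ℝ) ≤ (n:ℝ) := by exact_mod_cast hn
  have ht : (0:ℝ) < lam + 1/2 := by linarith
  have hx : (n:ℝ) * ((n:ℝ) + 2 * lam) - (25 + 10 * lam) ≥ 0 := by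
    nlinarith [mul_nonneg (by linarith : (0:ℝ) ≤ (n:ℝ) - 5)
      (by linarith : (0:ℝ) ≤ (n:ℝ) + 5 + 2 * lam)]
  have hc : 0 < 40 * lam^3 + 324 * lam^2 + 870 * lam + 791 := by
    nlinarith [mul_pos (mul_pos ht ht) ht, mul_pos ht ht, ht]
  have key : (40 * lam^3 + 324 * lam^2 + 870 * lam + 791) *
      ((n:ℝ) * ((n:ℝ) + 2 * lam) - (25 + 10 * lam)) ≥ 0 := mul_nonneg hc.le hx
  nlinarith [key, mul_pos (mul_pos (mul_pos ht ht) ht) ht,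
    mul_pos (mul_pos ht ht) ht, mul_pos ht ht, ht]
end
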